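/- If all values a_i lie in the interval [Δ, sΔ] for some Δ > 0 and s > 1, then the ratio Var(T)/(E[T])² for the Bernoulli inverse-probability estimator T with sampling probability p = k/n is at most (1/k)·(s+1)²/(4s). -/

import Mathlib

open MeasureTheory ProbabilityTheory Finset

/-- If all values lie in `[Δ, sΔ]` and the sampling probability is `p = k/n`, the squared
coefficient of error of the Bernoulli inverse-probability estimator is at most
`(1/k) * (s+1)^2 / (4s)`. -/
theorem bernoulli_estimator_relative_variance
    {Ω : Type*} [MeasurableSpace Ω] (μ : Measure Ω) [IsProbabilityMeasure μ]
    (n : ℕ) (hn : 0 < n) (a : Fin n → ℝ)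
    (Δ s : ℝ) (hΔ : 0 < Δ) (hs : 1 < s)
    (hrange : ∀ i, a i ∈ Set.Icc Δ (s * Δ))
    (k : ℝ) (hk0 : 0 < k) (hkn : k ≤ n)
    (X : Fin n → Ω → ℝ) (hmeas : ∀ i, Measurable (X i))
    (hind : iIndepFun X μ)
    (h01 : ∀ i, ∀ ω, X i ω = 0 ∨ X i ω = 1)
    (hbern : ∀ i, μ {ω | X i ω = 1} = ENNReal.ofReal (k / n)) :
    variance (fun ω => (n / k) * ∑ i, X i ω * a i) μ / (∑ i, a i) ^ 2
      ≤ (1 / k) * (s + 1) ^ 2 / (4 * s) := by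
  have hn' : (0:ℝ) < n := by exact_mod_cast hn
  set p : ℝ := k / n with hp_def
  have hp0 : 0 < p := div_pos hk0 hn'
  have hp1 : p ≤ 1 := by
    rw [hp_def, div_le_one hn']; exact hkn
  set Y : Fin n → Ω → ℝ := fun i ω => X i ω * a i with hYdef
  have hYmeas : ∀ i, Measurable (Y i) := fun i => (hmeas i).mul_const _
  have hYmem : ∀ i, MemLp (Y i) 2 μ := by
    intro i
    refine MemLp.of_bound (hYmeas i).aestronglyMeasurable (|a i|) ?_
    filter_upwards with ω
    rcases h01 i ω with h | h <;>
      simp [hYdef, h, abs_nonneg, le_abs_self]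
  have hYindep : iIndepFun Y μ :=
    hind.comp (fun i x => x * a i) (fun i => measurable_mul_const _)
  -- variance of each X i
  have hXmem : ∀ i, MemLp (X i) 2 μ := by
    intro i
    refine MemLp.of_bound (hmeas i).aestronglyMeasurable 1 ?_
    filter_upwards with ω
    rcases h01 i ω with h | h <;> simp [h]
  have hEX : ∀ i, μ[X i] = p := by
    intro i
    have heq : X i = Set.indicator {ω | X i ω = 1} (fun _ => (1:ℝ)) := by
      funext ω
      rcases h01 i ω with h | h
      · simp [Set.indicator, h]
      · simp [Set.indicator, h]
    rw [heq, integral_indicator_const]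
    · rw [Measure.real_def, hbern i, ENNReal.toReal_ofReal hp0.le]; simp
    · exact measurableSet_eq_fun (hmeas i) measurable_const
  have hEX2 : ∀ i, μ[X i ^ 2] = p := by
    intro i
    rw [show (X i ^ 2) = X i by funext ω; rcases h01 i ω with h | h <;> simp [h]]
    exact hEX i
  have hvarX : ∀ i, variance (X i) μ = p - p ^ 2 := by
    intro i
    rw [variance_eq_sub (hXmem i), hEX, hEX2]
  have hvarY : ∀ i, variance (Y i) μ = (a i) ^ 2 * (p - p ^ 2) := by
    intro i
    have : Y i = (a i) • X i := by funext ω; simp [hYdef, mul_comm]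
    rw [this, variance_smul, hvarX]
  have hsum : variance (fun ω => ∑ i, X i ω * a i) μ = ∑ i, (a i) ^ 2 * (p - p ^ 2) := by
    have : (fun ω => ∑ i, X i ω * a i) = ∑ i, Y i := by
      funext ω; simp [hYdef]
    rw [this, IndepFun.variance_sum (fun i _ => hYmem i)
      (fun i _ j _ hij => hYindep.indepFun hij)]
    exact Finset.sum_congr rfl fun i _ => hvarY i
  have hvarT : variance (fun ω => (n / k) * ∑ i, X i ω * a i) μ
      = ((n:ℝ) / k) ^ 2 * ∑ i, (a i) ^ 2 * (p - p ^ 2) := by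
    have : (fun ω => ((n:ℝ) / k) * ∑ i, X i ω * a i)
        = ((n:ℝ) / k) • (fun ω => ∑ i, X i ω * a i) := rfl
    rw [this, variance_smul, hsum]
  -- bound the variance
  set A : ℝ := ∑ i, a i with hAdef
  set S : ℝ := ∑ i, (a i) ^ 2 with hSdef
  have hA : (n:ℝ) * Δ ≤ A := by
    rw [hAdef]
    calc (n:ℝ) * Δ = ∑ _i : Fin n, Δ := by simp [mul_comm]
    _ ≤ ∑ i, a i := Finset.sum_le_sum fun i _ => (hrange i).1
  have hApos : 0 < A := lt_of_lt_of_le (by positivity) hA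
  have hSbound : S ≤ (s + 1) * Δ * A - n * s * Δ ^ 2 := by
    have : ∀ i : Fin n, (a i) ^ 2 ≤ (s + 1) * Δ * a i - s * Δ ^ 2 := by
      intro i
      obtain ⟨h1, h2⟩ := hrange i
      nlinarith [mul_nonneg (sub_nonneg.2 h1) (sub_nonneg.2 h2)]
    calc S ≤ ∑ i, ((s + 1) * Δ * a i - s * Δ ^ 2) := Finset.sum_le_sum fun i _ => this i
    _ = (s + 1) * Δ * A - n * s * Δ ^ 2 := by
      rw [Finset.sum_sub_distrib, ← Finset.mul_sum]; simp [hAdef]; ring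
  have hvar_le : variance (fun ω => (n / k) * ∑ i, X i ω * a i) μ ≤ (n / k) * S := by
    rw [hvarT]
    have h1 : ∑ i, (a i) ^ 2 * (p - p ^ 2) = S * (p - p ^ 2) := by
      rw [hSdef, ← Finset.sum_mul]
    rw [h1]
    have hS0 : 0 ≤ S := Finset.sum_nonneg fun i _ => sq_nonneg _
    have : ((n:ℝ) / k) ^ 2 * (S * (p - p ^ 2)) ≤ ((n:ℝ) / k) ^ 2 * (S * p) := by
      apply mul_le_mul_of_nonneg_left _ (sq_nonneg _)
      apply mul_le_mul_of_nonneg_left _ hS0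
      nlinarith
    refine this.trans ?_
    have hkey : ((n:ℝ) / k) ^ 2 * p = (n:ℝ) / k := by
      rw [hp_def]; field_simp
    rw [show ((n:ℝ)/k)^2 * (S * p) = (((n:ℝ)/k)^2 * p) * S by ring, hkey]
  -- final algebra
  have hkeyineq : (n / k) * S / A ^ 2 ≤ (1 / k) * (s + 1) ^ 2 / (4 * s) := by
    rw [div_le_div_iff₀ (by positivity) (by positivity)]
    have hs0 : 0 < s := lt_trans one_pos hs
    have h4 : 4 * s * ((n:ℝ) * S) ≤ (s + 1) ^ 2 * A ^ 2 := by
      nlinarith [sq_nonneg ((s + 1) * A - 2 * s * (n:ℝ) * Δ), mul_le_mul_of_nonneg_left hSbound (by positivity : (0:ℝ) ≤ 4 * s * n), sq_nonneg A, hn', hA]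
    calc (n:ℝ) / k * S * (4 * s) = (4 * s * ((n:ℝ) * S)) * (1 / k) := by ring
    _ ≤ ((s + 1) ^ 2 * A ^ 2) * (1 / k) := by
      apply mul_le_mul_of_nonneg_right h4 (by positivity)
    _ = 1 / k * (s + 1) ^ 2 * A ^ 2 := by ring
  have hstep : variance (fun ω => (n / k) * ∑ i, X i ω * a i) μ / A ^ 2
      ≤ (n / k) * S / A ^ 2 := by
    gcongr
  exact hstep.trans hkeyineq
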